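/- arXiv:1709.06694 — 3 statements merged into one kernel-verified Lean document; each statement's English description precedes it below -/
import Mathlib

section
/- Let E and E_h be closed subspaces of a Hilbert space 𝒱 with orthogonal projections S and P (onto E and E_h respectively). If the quantity δ := sup_{e ∈ E, ‖e‖=1} dist(e, E_h) satisfies δ < 1 and dim E_h = dim E = m < ∞, then gap_𝒱(E, E_h) = δ, where gap_𝒱(M,L) = max( sup_{m∈M,‖m‖=1} dist(m,L), sup_{l∈L,‖l‖=1} dist(l,M) ). -/
set_option maxHeartbeats 1000000

private lemma infDist_eq_norm_sub_proj {V : Type*} [NormedAddCommGroup V]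
    [InnerProductSpace ℂ V] (K : Submodule ℂ V) [K.HasOrthogonalProjection] (x : V) :
    Metric.infDist x (K : Set V) = ‖x - K.orthogonalProjectionOnto x‖ := by
  apply le_antisymm
  · have := Metric.infDist_le_dist_of_mem (x := x) (K.orthogonalProjectionOnto x).2
    simpa [dist_eq_norm] using this
  · rw [Metric.infDist_eq_iInf]
    haveI : Nonempty (K : Set V) := ⟨0, K.zero_mem⟩
    apply le_ciInf
    intro y
    rw [dist_eq_norm, ← Submodule.starProjection_apply, Submodule.starProjection_minimal]
    exact ciInf_le ⟨0, by rintro r ⟨v, rfl⟩; positivity⟩ (⟨y.1, y.2⟩ : K)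

private lemma pyth_proj {V : Type*} [NormedAddCommGroup V]
    [InnerProductSpace ℂ V] (K : Submodule ℂ V) [K.HasOrthogonalProjection] (x : V) :
    ‖x‖ ^ 2 = ‖(K.orthogonalProjectionOnto x : V)‖ ^ 2 + ‖x - K.orthogonalProjectionOnto x‖ ^ 2 := by
  have h0 : (inner ℂ ((K.orthogonalProjectionOnto x : V)) (x - K.orthogonalProjectionOnto x) : ℂ) = 0 := by
    rw [← inner_conj_symm, ← Submodule.starProjection_apply,
      Submodule.starProjection_inner_eq_zero x _ (K.starProjection_apply_mem x)]
    simp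
  have h2 := norm_add_sq_eq_norm_sq_add_norm_sq_of_inner_eq_zero _ _ h0
  have h3 : (K.orthogonalProjectionOnto x : V) + (x - K.orthogonalProjectionOnto x) = x := by abel
  rw [h3] at h2
  simpa [sq] using h2

theorem stmt7 {V : Type*} [NormedAddCommGroup V] [InnerProductSpace ℂ V] [CompleteSpace V]
    (E Eh : Submodule ℂ V) (m : ℕ) (hm : 0 < m)
    [FiniteDimensional ℂ E] [FiniteDimensional ℂ Eh]
    (hdimE : Module.finrank ℂ E = m) (hdimEh : Module.finrank ℂ Eh = m)
    (δ₁ δ₂ : ℝ)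
    (hδ₁ : δ₁ = sSup ((fun e => Metric.infDist e (Eh : Set V)) ''
      {e : V | e ∈ E ∧ ‖e‖ = 1}))
    (hδ₂ : δ₂ = sSup ((fun e => Metric.infDist e (E : Set V)) ''
      {e : V | e ∈ Eh ∧ ‖e‖ = 1}))
    (h1 : δ₁ < 1) :
    max δ₁ δ₂ = δ₁ := by
  set Q : V →L[ℂ] Eh := Eh.orthogonalProjectionOnto with hQ
  have hbdd : BddAbove ((fun e => Metric.infDist e (Eh : Set V)) ''
      {e : V | e ∈ E ∧ ‖e‖ = 1}) := by
    refine ⟨1, ?_⟩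
    rintro r ⟨e, ⟨heE, hen⟩, rfl⟩
    have := Metric.infDist_le_dist_of_mem (x := e) Eh.zero_mem
    simpa [dist_eq_norm, hen] using this
  -- δ₁ ≥ 0 : there exists a unit vector in E
  haveI : Nontrivial E := by
    apply Module.nontrivial_of_finrank_pos (R := ℂ)
    omega
  obtain ⟨v, hv0⟩ := exists_ne (0 : E)
  have hvV : (v : V) ≠ 0 := by simpa using hv0
  have hvn : ‖(v : V)‖ ≠ 0 := norm_ne_zero_iff.mpr hvV
  have hnorm_unit : ∀ x : V, x ≠ 0 → ‖((‖x‖ : ℂ))⁻¹ • x‖ = 1 := by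
    intro x hx
    rw [norm_smul]
    simp [inv_mul_cancel₀ (norm_ne_zero_iff.mpr hx)]
  have hδ₁0 : 0 ≤ δ₁ := by
    rw [hδ₁]
    refine le_trans Metric.infDist_nonneg
      (le_csSup hbdd ⟨((‖(v : V)‖ : ℂ))⁻¹ • (v : V), ⟨E.smul_mem _ v.2, ?_⟩, rfl⟩)
    exact hnorm_unit _ hvV
  -- key fact: ∀ x ∈ E, ‖x - Q x‖ ≤ δ₁ ‖x‖
  have hB : ∀ x ∈ E, ‖x - (Q x : V)‖ ≤ δ₁ * ‖x‖ := by
    intro x hx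
    rcases eq_or_ne x 0 with rfl | hx0
    · simp
    · have hxn : ‖x‖ ≠ 0 := norm_ne_zero_iff.mpr hx0
      set y : V := ((‖x‖ : ℂ))⁻¹ • x with hy
      have h1' : ‖y - (Q y : V)‖ ≤ δ₁ := by
        rw [← infDist_eq_norm_sub_proj, hδ₁]
        exact le_csSup hbdd ⟨y, ⟨E.smul_mem _ hx, hnorm_unit _ hx0⟩, rfl⟩
      have hsmul : y - (Q y : V) = ((‖x‖ : ℂ))⁻¹ • (x - (Q x : V)) := by
        rw [hy, smul_sub, map_smul]
        push_cast
        rfl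
      rw [hsmul, norm_smul] at h1'
      have hni : ‖((‖x‖ : ℂ))⁻¹‖ = ‖x‖⁻¹ := by
        rw [norm_inv]
        simp
      rw [hni] at h1'
      calc ‖x - (Q x : V)‖ = ‖x‖ * (‖x‖⁻¹ * ‖x - (Q x : V)‖) := by field_simp
      _ ≤ ‖x‖ * δ₁ := mul_le_mul_of_nonneg_left h1' (norm_nonneg _)
      _ = δ₁ * ‖x‖ := mul_comm _ _
  set c : ℝ := Real.sqrt (1 - δ₁ ^ 2) with hc
  have hc2 : c ^ 2 = 1 - δ₁ ^ 2 := Real.sq_sqrt (by nlinarith)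
  have hcpos : 0 < c := Real.sqrt_pos.mpr (by nlinarith)
  -- lower bound:  c ‖x‖ ≤ ‖Q x‖ for x ∈ E
  have hC : ∀ x ∈ E, c * ‖x‖ ≤ ‖(Q x : V)‖ := by
    intro x hx
    have h2 := pyth_proj Eh x
    have h3 := hB x hx
    have h4 : (c * ‖x‖) ^ 2 ≤ ‖(Q x : V)‖ ^ 2 := by
      have hxn : 0 ≤ ‖x‖ := norm_nonneg _
      nlinarith [norm_nonneg (x - (Q x : V))]
    exact le_of_pow_le_pow_left₀ two_ne_zero (norm_nonneg _) h4
  -- T : E →ₗ Eh is bijective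
  set T : E →ₗ[ℂ] Eh := (Q : V →ₗ[ℂ] Eh).comp E.subtype with hT
  have hTinj : Function.Injective T := by
    rw [← LinearMap.ker_eq_bot, Submodule.eq_bot_iff]
    intro x hxker
    have h0 : T x = 0 := hxker
    have hq0 : (Q (x : V) : V) = 0 := by
      rw [show Q (x : V) = T x from rfl, h0]
      rfl
    have h5 := hC (x : V) x.2
    rw [hq0, norm_zero] at h5
    have hx0 : ‖(x : V)‖ = 0 := by nlinarith [norm_nonneg (x : V)]
    exact Subtype.ext (norm_eq_zero.mp hx0)
  have hTsurj : Function.Surjective T :=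
    (LinearMap.injective_iff_surjective_of_finrank_eq_finrank
      (by rw [hdimE, hdimEh])).mp hTinj
  -- main bound: every unit f ∈ Eh is within δ₁ of E
  have hmain : ∀ f ∈ Eh, ‖f‖ = 1 → Metric.infDist f (E : Set V) ≤ δ₁ := by
    intro f hf hfn
    obtain ⟨x, hxf⟩ := hTsurj ⟨f, hf⟩
    have hxf' : (Q (x : V) : V) = f := by
      rw [show Q (x : V) = T x from rfl, hxf]
    set p : V := (E.orthogonalProjectionOnto f : V) with hp
    have hinner : (inner ℂ f f : ℂ) = inner ℂ p (x : V) := by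
      have e1 : (inner ℂ f ((x : V) - (Q (x : V) : V)) : ℂ) = 0 := by
        rw [← inner_conj_symm, show (Q (x : V) : V) = Eh.starProjection (x : V) from rfl,
          Submodule.starProjection_inner_eq_zero (x : V) f hf]
        simp
      have e2 : (inner ℂ (f - p) (x : V) : ℂ) =  0 :=
        Submodule.starProjection_inner_eq_zero f (x : V) x.2
      calc (inner ℂ f f : ℂ) = inner ℂ f (Q (x : V) : V) := by rw [hxf']
      _ = inner ℂ f (x : V) - inner ℂ f ((x : V) - (Q (x : V) : V)) := by
            rw [inner_sub_right]; ring
      _ = inner ℂ f (x : V) := by rw [e1]; ring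
      _ = inner ℂ (p + (f - p)) (x : V) := by rw [show p + (f - p) = f by abel]
      _ = inner ℂ p (x : V) + inner ℂ (f - p) (x : V) := inner_add_left _ _ _
      _ = inner ℂ p (x : V) := by rw [e2]; ring
    have hxnorm : c * ‖(x : V)‖ ≤ 1 := by
      have := hC (x : V) x.2
      rwa [hxf', hfn] at this
    have h6 : (1 : ℝ) ≤ ‖p‖ * ‖(x : V)‖ := by
      have hcs := norm_inner_le_norm (𝕜 := ℂ) p (x : V)
      rw [← hinner] at hcs
      have h7 : ‖(inner ℂ f f : ℂ)‖ = 1 := by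
        rw [inner_self_eq_norm_sq_to_K, hfn]
        norm_num
      linarith
    have hpnorm : c ≤ ‖p‖ := by
      by_contra hcon
      push_neg at hcon
      have hp0 : 0 ≤ ‖p‖ := norm_nonneg _
      have hx0 : 0 ≤ ‖(x : V)‖ := norm_nonneg _
      nlinarith
    have hpyE := pyth_proj E f
    rw [hfn] at hpyE
    rw [infDist_eq_norm_sub_proj]
    nlinarith [norm_nonneg (f - p)]
  have hδ₂le : δ₂ ≤ δ₁ := by
    rw [hδ₂]
    apply Real.sSup_le _ hδ₁0
    rintro r ⟨f, ⟨hf, hfn⟩, rfl⟩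
    exact hmain f hf hfn
  exact max_eq_left hδ₂le
end

section
/- Let R be a bounded selfadjoint operator on a Hilbert space with ‖R‖ ≤ δ² < 1. Define T = (I−R)^{−1/2} − I via the convergent binomial series Σ_{n=1}^∞ binom(−1/2, n)(−R)^n. Then ‖T‖ ≤ ‖R‖ · [√(1−δ²) + (1−δ²)]^{−1}. -/
/-- The generalized binomial coefficient binom(−1/2, n). -/
noncomputable def binomHalf (n : ℕ) : ℝ :=
  (∏ i ∈ Finset.range n, (-(1 / 2 : ℝ) - i)) / n.factorial

namespace Stmt9Aux

noncomputable def A (n : ℕ) : ℝ := |binomHalf n|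

lemma binomHalf_zero : binomHalf 0 = 1 := by simp [binomHalf]

lemma binomHalf_succ (n : ℕ) :
    binomHalf (n + 1) = binomHalf n * ((-(1 / 2 : ℝ) - n) / (n + 1)) := by
  have hf : (n.factorial : ℝ) ≠ 0 := Nat.cast_ne_zero.mpr n.factorial_ne_zero
  have hn : ((n : ℝ) + 1) ≠ 0 := by positivity
  unfold binomHalf
  rw [Finset.prod_range_succ, Nat.factorial_succ, div_mul_div_comm]
  push_cast
  rw [div_eq_div_iff (by positivity) (by positivity)]
  ring

lemma A_zero : A 0 = 1 := by simp [A, binomHalf_zero]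

lemma A_succ (n : ℕ) : A (n + 1) = A n * (((n : ℝ) + 1 / 2) / (n + 1)) := by
  have h2 : (0:ℝ) < (n : ℝ) + 1 := by positivity
  rw [A, A, binomHalf_succ, abs_mul, abs_div]
  congr 1
  rw [abs_of_nonpos (by linarith : -(1 / 2 : ℝ) - n ≤ 0), abs_of_pos h2]
  ring

lemma A_nonneg (n : ℕ) : 0 ≤ A n := abs_nonneg _

lemma A_le_one (n : ℕ) : A n ≤ 1 := by
  induction n with
  | zero => simp [A_zero]
  | succ n ih =>
    rw [A_succ]
    have h2 : (0:ℝ) < (n : ℝ) + 1 := by positivity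
    have h3 : ((n : ℝ) + 1 / 2) / (n + 1) ≤ 1 := by
      rw [div_le_one h2]; linarith
    calc A n * (((n : ℝ) + 1 / 2) / (n + 1)) ≤ 1 * 1 :=
        mul_le_mul ih h3 (by positivity) one_pos.le
      _ = 1 := one_mul 1

lemma key (n : ℕ) : A (n + 1) * ((n : ℝ) + 1) = A n * ((n : ℝ) + 1 / 2) := by
  rw [A_succ]
  have h2 : ((n : ℝ) + 1) ≠ 0 := by positivity
  field_simp

lemma summable_A_pow {x : ℝ} (hx : |x| < 1) : Summable fun n => A n * x ^ n := by
  refine Summable.of_norm_bounded (summable_geometric_of_lt_one (abs_nonneg x) hx) fun n => ?_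
  rw [norm_mul, norm_pow, Real.norm_eq_abs, Real.norm_eq_abs, abs_of_nonneg (A_nonneg n)]
  calc A n * |x| ^ n ≤ 1 * |x| ^ n := by
        have := A_le_one n; have := A_nonneg n
        nlinarith [pow_nonneg (abs_nonneg x) n]
    _ = |x| ^ n := one_mul _

lemma summable_nd {x : ℝ} (hx : |x| < 1) :
    Summable fun n : ℕ => (n : ℝ) * x ^ (n - 1) := by
  rw [← _root_.summable_nat_add_iff 1]
  have h1 : Summable fun n : ℕ => ((n : ℝ) + 1) * x ^ n := by
    have ha : Summable fun n : ℕ => (n : ℝ) * x ^ n := by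
      simpa using summable_pow_mul_geometric_of_norm_lt_one 1 (by rwa [Real.norm_eq_abs])
    have hb : Summable fun n : ℕ => x ^ n :=
      summable_geometric_of_norm_lt_one (by rwa [Real.norm_eq_abs])
    simpa [add_mul] using ha.add hb
  refine h1.congr fun n => ?_
  simp

lemma summable_D {x : ℝ} (hx : |x| < 1) :
    Summable fun n : ℕ => A n * ((n : ℝ) * x ^ (n - 1)) := by
  refine Summable.of_norm_bounded (summable_nd hx).abs fun n => ?_
  rw [Real.norm_eq_abs, abs_mul, abs_of_nonneg (A_nonneg n)]
  have h := abs_nonneg ((n : ℝ) * x ^ (n - 1))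
  nlinarith [A_le_one n, A_nonneg n]

noncomputable def f (x : ℝ) : ℝ := ∑' n, A n * x ^ n

lemma hasDerivAt_f {y : ℝ} (hy : |y| < 1) :
    HasDerivAt f (∑' n, A n * ((n : ℝ) * y ^ (n - 1))) y := by
  set r : ℝ := (1 + |y|) / 2 with hr
  have habs := abs_nonneg y
  have hr0 : 0 < r := by positivity
  have hyr : |y| < r := by rw [hr]; linarith
  have hr1 : r < 1 := by rw [hr]; linarith
  have hmem : y ∈ Set.Ioo (-r) r := abs_lt.mp hyr
  have hu : Summable fun n : ℕ => (n : ℝ) * r ^ (n - 1) := summable_nd (by rwa [abs_of_pos hr0])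
  refine hasDerivAt_tsum_of_isPreconnected (F := ℝ)
    (u := fun n : ℕ => (n : ℝ) * r ^ (n - 1))
    (g := fun (n : ℕ) (z : ℝ) => A n * z ^ n)
    (g' := fun (n : ℕ) (z : ℝ) => A n * ((n : ℝ) * z ^ (n - 1)))
    (y₀ := 0) (hu.abs.congr fun n => abs_of_nonneg (by positivity))
    isOpen_Ioo (convex_Ioo _ _).isPreconnected
    (fun n z _ => (hasDerivAt_pow n z).const_mul (A n))
    (fun n z hz => ?_) ⟨by linarith, hr0⟩
    (summable_A_pow (by norm_num)) hmem
  have hz : |z| ≤ r := le_of_lt (abs_lt.mpr ⟨hz.1, hz.2⟩)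
  rw [Real.norm_eq_abs, abs_mul, abs_mul, abs_of_nonneg (A_nonneg n),
    abs_of_nonneg (Nat.cast_nonneg n : (0:ℝ) ≤ (n:ℝ)), abs_pow]
  have h1 : |z| ^ (n - 1) ≤ r ^ (n - 1) := pow_le_pow_left₀ (abs_nonneg z) hz _
  have hn0 : (0:ℝ) ≤ (n : ℝ) := Nat.cast_nonneg n
  have ht : (n : ℝ) * |z| ^ (n - 1) ≤ (n : ℝ) * r ^ (n - 1) :=
    mul_le_mul_of_nonneg_left h1 hn0
  calc A n * ((n : ℝ) * |z| ^ (n - 1)) ≤ 1 * ((n : ℝ) * r ^ (n - 1)) :=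
        mul_le_mul (A_le_one n) ht (by positivity) one_pos.le
    _ = (n : ℝ) * r ^ (n - 1) := one_mul _

lemma deriv_identity {y : ℝ} (hy : |y| < 1) :
    (1 - y) * (∑' n, A n * ((n : ℝ) * y ^ (n - 1))) = f y / 2 := by
  set D := ∑' n, A n * ((n : ℝ) * y ^ (n - 1)) with hD
  have hsum := summable_D hy
  have hshift : Summable fun n : ℕ => A (n + 1) * (((n : ℝ) + 1) * y ^ n) := by
    have h := (_root_.summable_nat_add_iff 1).mpr hsum
    refine h.congr fun n => ?_
    simp
  have h1 : D = ∑' n, A (n + 1) * (((n : ℝ) + 1) * y ^ n) := by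
    rw [hD, Summable.tsum_eq_zero_add hsum]
    simp
  have hyD : Summable fun n : ℕ => A n * ((n : ℝ) * y ^ n) := by
    refine (hsum.mul_left y).congr fun n => ?_
    rcases n with _ | m
    · simp
    · show y * (A (m+1) * ((↑(m+1) : ℝ) * y ^ (m + 1 - 1))) = _
      simp only [Nat.add_sub_cancel]
      ring
  have h2 : y * D = ∑' n, A n * ((n : ℝ) * y ^ n) := by
    rw [hD, ← tsum_mul_left]
    refine tsum_congr fun n => ?_
    rcases n with _ | m
    · simp
    · simp only [Nat.add_sub_cancel]
      push_cast
      ring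
  have h3 : (1 - y) * D = D - y * D := by ring
  rw [h3, h2, h1, ← Summable.tsum_sub hshift hyD]
  calc (∑' n : ℕ, (A (n + 1) * (((n : ℝ) + 1) * y ^ n) - A n * ((n : ℝ) * y ^ n)))
      = ∑' n : ℕ, (A n * y ^ n) / 2 := by
        refine tsum_congr fun n => ?_
        linear_combination y ^ n * key n
    _ = (∑' n : ℕ, A n * y ^ n) / 2 := by rw [tsum_div_const]
    _ = f y / 2 := rfl

lemma f_zero : f 0 = 1 := by
  rw [f, tsum_eq_single 0 (fun n hn => by simp [zero_pow hn])]
  simp [A_zero]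

lemma hasDerivAt_h {z : ℝ} (hz : |z| < 1) :
    HasDerivAt (fun z => (1 - z) * f z ^ 2) 0 z := by
  set D := ∑' n, A n * ((n : ℝ) * z ^ (n - 1)) with hDdef
  have hdf : HasDerivAt f D z := hasDerivAt_f hz
  have h1 : HasDerivAt (fun z : ℝ => 1 - z) (-1) z := by
    simpa using (hasDerivAt_id z).const_sub 1
  have h2 : HasDerivAt (fun z => f z ^ 2) (2 * f z ^ 1 * D) z := hdf.pow 2
  have h3 := h1.mul h2
  have hval : -1 * f z ^ 2 + (1 - z) * (2 * f z ^ 1 * D) = 0 := by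
    have hident : (1 - z) * D = f z / 2 := deriv_identity hz
    have hre : (1 - z) * (2 * f z ^ 1 * D) = 2 * f z * ((1 - z) * D) := by ring
    rw [hre, hident]
    ring
  rw [hval] at h3
  exact h3

lemma f_sq {y : ℝ} (hy0 : 0 ≤ y) (hy : y < 1) : (1 - y) * f y ^ 2 = 1 := by
  have habs : ∀ z ∈ Set.Icc 0 y, |z| < 1 := fun z hz => by
    rw [abs_of_nonneg hz.1]; linarith [hz.2]
  have hcont : ContinuousOn (fun z => (1 - z) * f z ^ 2) (Set.Icc 0 y) :=
    fun z hz => ((hasDerivAt_h (habs z hz)).differentiableAt).continuousAt.continuousWithinAt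
  have hd : ∀ z ∈ Set.Ico 0 y, HasDerivWithinAt (fun z => (1 - z) * f z ^ 2) 0 (Set.Ici z) z :=
    fun z hz => (hasDerivAt_h (habs z ⟨hz.1, le_of_lt hz.2⟩)).hasDerivWithinAt
  have := constant_of_has_deriv_right_zero hcont hd y (Set.right_mem_Icc.mpr hy0)
  rw [this]
  rw [f_zero]
  norm_num

end Stmt9Aux

open Stmt9Aux

/- STATEMENT 9: Let R be a bounded selfadjoint operator with ‖R‖ ≤ δ² < 1, and let
T = (I−R)^{−1/2} − I = Σ_{n≥1} binom(−1/2,n)(−R)ⁿ (convergent binomial series).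
Then ‖T‖ ≤ ‖R‖·[√(1−δ²) + (1−δ²)]⁻¹. -/
set_option maxHeartbeats 1000000 in
theorem stmt9 {H : Type*} [NormedAddCommGroup H] [InnerProductSpace ℂ H] [CompleteSpace H]
    (R : H →L[ℂ] H) (hsa : IsSelfAdjoint R) (δ : ℝ) (hR : ‖R‖ ≤ δ ^ 2) (hδ : δ ^ 2 < 1)
    (T : H →L[ℂ] H) (hT : T = ∑' n : ℕ, binomHalf (n + 1) • (-R) ^ (n + 1)) :
    ‖T‖ ≤ ‖R‖ * (Real.sqrt (1 - δ ^ 2) + (1 - δ ^ 2))⁻¹ := by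
  set x := ‖R‖ with hx
  have hx0 : 0 ≤ x := norm_nonneg R
  have hx1 : x < 1 := lt_of_le_of_lt hR hδ
  have hxabs : |x| < 1 := by rwa [abs_of_nonneg hx0]
  have hterm : ∀ n : ℕ, ‖binomHalf (n + 1) • (-R) ^ (n + 1)‖ ≤ A (n + 1) * x ^ (n + 1) := by
    intro n
    rw [norm_smul, Real.norm_eq_abs]
    have h1 : ‖(-R) ^ (n + 1)‖ ≤ ‖-R‖ ^ (n + 1) := norm_pow_le' (-R) n.succ_pos
    rw [norm_neg] at h1
    exact mul_le_mul_of_nonneg_left h1 (abs_nonneg _)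
  have hsumA : Summable fun n => A (n + 1) * x ^ (n + 1) :=
    (_root_.summable_nat_add_iff 1).mpr (summable_A_pow hxabs)
  have hsumN : Summable fun n => ‖binomHalf (n + 1) • (-R) ^ (n + 1)‖ :=
    Summable.of_nonneg_of_le (fun n => norm_nonneg _) hterm hsumA
  have hTle : ‖T‖ ≤ ∑' n, A (n + 1) * x ^ (n + 1) := by
    rw [hT]
    exact le_trans (norm_tsum_le_tsum_norm hsumN) (Summable.tsum_le_tsum hterm hsumN hsumA)
  have hfx : ∑' n, A (n + 1) * x ^ (n + 1) = f x - 1 := by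
    have h := Summable.tsum_eq_zero_add (summable_A_pow hxabs)
    rw [f, h]
    simp [A_zero]
  have hu : (0:ℝ) < 1 - x := by linarith
  have hsq : (1 - x) * f x ^ 2 = 1 := f_sq hx0 hx1
  have hfnn : 0 ≤ f x := tsum_nonneg fun n => mul_nonneg (A_nonneg n) (pow_nonneg hx0 n)
  have hfval : f x = (Real.sqrt (1 - x))⁻¹ := by
    have h2 : f x ^ 2 = (1 - x)⁻¹ := by
      field_simp
      linarith [hsq]
    rw [← Real.sqrt_sq hfnn, h2, ← Real.sqrt_inv]
  set u := 1 - x with hudef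
  set v := 1 - δ ^ 2 with hvdef
  have hv : (0:ℝ) < v := by rw [hvdef]; linarith
  have hvu : v ≤ u := by rw [hudef, hvdef]; linarith
  have hsu : 0 < Real.sqrt u := Real.sqrt_pos.mpr hu
  have hsv : 0 < Real.sqrt v := Real.sqrt_pos.mpr hv
  have husq : Real.sqrt u * Real.sqrt u = u := Real.mul_self_sqrt (le_of_lt hu)
  have hstep1 : (Real.sqrt u)⁻¹ - 1 = x / (Real.sqrt u + u) := by
    have hden : (0:ℝ) < Real.sqrt u + u := by positivity
    have hxeq : x = 1 - u := by rw [hudef]; ring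
    field_simp
    nlinarith [husq]
  have hstep2 : x / (Real.sqrt u + u) ≤ x / (Real.sqrt v + v) := by
    have hsvu : Real.sqrt v ≤ Real.sqrt u := Real.sqrt_le_sqrt hvu
    have hdenv : 0 < Real.sqrt v + v := by positivity
    apply div_le_div_of_nonneg_left hx0 hdenv
    linarith
  calc ‖T‖ ≤ ∑' n, A (n + 1) * x ^ (n + 1) := hTle
    _ = f x - 1 := hfx
    _ = (Real.sqrt u)⁻¹ - 1 := by rw [hfval]
    _ = x / (Real.sqrt u + u) := hstep1
    _ ≤ x / (Real.sqrt v + v) := hstep2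
    _ = ‖R‖ * (Real.sqrt (1 - δ ^ 2) + (1 - δ ^ 2))⁻¹ := by
        rw [div_eq_mul_inv]
end

section
/- Let S and Q be orthogonal projections on a Hilbert space ℋ with ‖S − Q‖ < 1, and set R = (S−Q)². Then the operator J = (I−R)^{−1/2}[QS + (I−Q)(I−S)] is a unitary operator on ℋ mapping ran(S) bijectively onto ran(Q), with inverse J⁻¹ = J* = [SQ + (I−S)(I−Q)](I−R)^{−1/2}. -/
set_option maxHeartbeats 2000000

lemma binomHalf_zero : binomHalf 0 = 1 := by simp [binomHalf]

lemma binomHalf_rec (n : ℕ) :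
    ((n : ℝ) + 1) * binomHalf (n + 1) = (-(1 / 2 : ℝ) - n) * binomHalf n := by
  have h : (n.factorial : ℝ) ≠ 0 := Nat.cast_ne_zero.mpr n.factorial_ne_zero
  simp only [binomHalf, Finset.prod_range_succ, Nat.factorial_succ]
  push_cast
  field_simp

lemma abs_binomHalf_le (n : ℕ) : |binomHalf n| ≤ 1 := by
  have h1 : |∏ i ∈ Finset.range n, (-(1 / 2 : ℝ) - i)| = ∏ i ∈ Finset.range n, ((i : ℝ) + 1/2) := by
    rw [Finset.abs_prod]
    refine Finset.prod_congr rfl fun i _ => ?_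
    rw [abs_of_nonpos (by nlinarith [Nat.cast_nonneg (α := ℝ) i] : (-(1 / 2 : ℝ) - i) ≤ 0)]
    ring
  have h2 : ∏ i ∈ Finset.range n, ((i : ℝ) + 1/2) ≤ n.factorial := by
    rw [← Finset.prod_range_add_one_eq_factorial]
    push_cast
    refine Finset.prod_le_prod (fun i _ => by positivity) (fun i _ => by linarith)
  have h3 : (0:ℝ) < n.factorial := by positivity
  rw [binomHalf, abs_div, abs_of_pos h3, div_le_one h3, h1]
  exact h2

noncomputable def Fc (n : ℕ) : ℝ := ∑ i ∈ Finset.range (n+1), binomHalf i * binomHalf (n - i)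
noncomputable def S1 (n : ℕ) : ℝ :=
  ∑ i ∈ Finset.range (n+1), (i : ℝ) * (binomHalf i * binomHalf (n - i))

lemma two_S1 (n : ℕ) : S1 n + S1 n = n * Fc n := by
  have hrefl : S1 n = ∑ i ∈ Finset.range (n+1), ((n - i : ℕ) : ℝ) * (binomHalf i * binomHalf (n - i)) := by
    unfold S1
    rw [← Finset.sum_range_reflect]
    refine Finset.sum_congr rfl fun i hi => ?_
    have hi' : i ≤ n := Nat.lt_succ_iff.mp (Finset.mem_range.mp hi)
    have h1 : n + 1 - 1 - i = n - i := by omega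
    have h2 : n - (n - i) = i := by omega
    rw [h1, h2]
    ring
  nth_rewrite 2 [hrefl]
  unfold S1 Fc
  rw [← Finset.sum_add_distrib, Finset.mul_sum]
  refine Finset.sum_congr rfl fun i hi => ?_
  have hi' : i ≤ n := Nat.lt_succ_iff.mp (Finset.mem_range.mp hi)
  have : ((n - i : ℕ) : ℝ) = (n : ℝ) - i := by
    rw [Nat.cast_sub hi']
  rw [this]; ring

lemma S1_succ (n : ℕ) : S1 (n+1) = -(1/2) * Fc n - S1 n := by
  unfold S1
  rw [Finset.sum_range_succ']
  simp only [Nat.cast_zero, zero_mul, add_zero]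
  push_cast
  have : ∀ i ∈ Finset.range (n+1),
      ((i:ℝ)+1) * (binomHalf (i+1) * binomHalf (n - i))
      = (-(1/2 : ℝ) - i) * (binomHalf i * binomHalf (n - i)) := by
    intro i hi
    rw [← mul_assoc, binomHalf_rec i, mul_assoc]
  rw [Finset.sum_congr rfl this]
  unfold Fc
  rw [Finset.mul_sum, ← Finset.sum_sub_distrib]
  refine Finset.sum_congr rfl fun i hi => by ring

lemma Fc_succ (n : ℕ) : Fc (n+1) = -Fc n := by
  have h1 := two_S1 (n+1)
  have h2 := S1_succ n
  have h3 := two_S1 n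
  have hn : ((n:ℝ)+1) ≠ 0 := by positivity
  have : ((n:ℝ)+1) * Fc (n+1) = -(((n:ℝ)+1) * Fc n) := by push_cast at h1 ⊢; nlinarith
  field_simp at this
  nlinarith [this]

lemma Fc_eq (n : ℕ) : Fc n = (-1)^n := by
  induction n with
  | zero => simp [Fc, binomHalf_zero]
  | succ k ih => rw [Fc_succ, ih]; ring

section RingLemmas
variable {A : Type*} [Ring A] {S Q : A} (hS : S * S = S) (hQ : Q * Q = Q)

omit hQ in
include hS in
lemma ringAS : (Q*S + (1-Q)*(1-S)) * S = Q * S := by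
  have hS' : ∀ x : A, S * (S * x) = S * x := fun x => by rw [← mul_assoc, hS]
  simp only [mul_add, add_mul, mul_sub, sub_mul, mul_one, one_mul, mul_assoc, hS, hS']
  abel

omit hS in
include hQ in
lemma ringQA : Q * (Q*S + (1-Q)*(1-S)) = Q * S := by
  have hQ' : ∀ x : A, Q * (Q * x) = Q * x := fun x => by rw [← mul_assoc, hQ]
  simp only [mul_add, add_mul, mul_sub, sub_mul, mul_one, one_mul, mul_assoc, hQ, hQ']
  abel

include hS hQ in
lemma ringBA : (S*Q + (1-S)*(1-Q)) * (Q*S + (1-Q)*(1-S)) = 1 - (S-Q)^2 := by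
  have hS' : ∀ x : A, S * (S * x) = S * x := fun x => by rw [← mul_assoc, hS]
  have hQ' : ∀ x : A, Q * (Q * x) = Q * x := fun x => by rw [← mul_assoc, hQ]
  simp only [mul_add, add_mul, mul_sub, sub_mul, mul_one, one_mul, sub_sq', pow_two,
    mul_assoc, hS, hQ, hS', hQ']
  abel

include hS hQ in
lemma ringRQ : (S-Q)^2 * Q = Q * (S-Q)^2 := by
  have hS' : ∀ x : A, S * (S * x) = S * x := fun x => by rw [← mul_assoc, hS]
  have hQ' : ∀ x : A, Q * (Q * x) = Q * x := fun x => by rw [← mul_assoc, hQ]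
  simp only [sub_sq', pow_two, mul_add, add_mul, mul_sub, sub_mul, mul_one, one_mul,
    mul_assoc, hS, hQ, hS', hQ']
  abel

end RingLemmas

set_option maxHeartbeats 2000000 in
lemma geomCLM {H : Type*} [NormedAddCommGroup H] [InnerProductSpace ℂ H] [CompleteSpace H]
    (R : H →L[ℂ] H) (h : ‖R‖ < 1) : (∑' n : ℕ, R^n) * (1 - R) = 1 :=
  geom_series_mul_neg R h

theorem stmt10 {H : Type*} [NormedAddCommGroup H] [InnerProductSpace ℂ H] [CompleteSpace H]
    (S Q : H →L[ℂ] H) (hSsa : IsSelfAdjoint S) (hQsa : IsSelfAdjoint Q)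
    (hS2 : S * S = S) (hQ2 : Q * Q = Q) (hSQ : ‖S - Q‖ < 1)
    (R isr J Ji : H →L[ℂ] H)
    (hR : R = (S - Q) ^ 2)
    (hisr : isr = ∑' n : ℕ, binomHalf n • (-R) ^ n)   -- (I−R)^{−1/2}, binomial series
    (hJ : J = isr * (Q * S + (1 - Q) * (1 - S)))
    (hJi : Ji = (S * Q + (1 - S) * (1 - Q)) * isr) :
    J * Ji = 1 ∧ Ji * J = 1 ∧ Ji = ContinuousLinearMap.adjoint J ∧
      (∀ x : H, ‖J x‖ = ‖x‖) ∧
      (fun x => J x) '' (LinearMap.range (S : H →ₗ[ℂ] H) : Set H) = (LinearMap.range (Q : H →ₗ[ℂ] H) : Set H) := by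
  have hRnorm : ‖R‖ < 1 := by
    rw [hR, sq]
    calc ‖(S-Q)*(S-Q)‖ ≤ ‖S-Q‖*‖S-Q‖ := norm_mul_le _ _
      _ < 1 := by nlinarith [norm_nonneg (S-Q)]
  -- summability
  have hpowle : ∀ n : ℕ, ‖(-R)^n‖ ≤ ‖R‖^n := by
    intro n
    induction n with
    | zero => rw [pow_zero, pow_zero]; exact ContinuousLinearMap.norm_id_le
    | succ k ih =>
      rw [pow_succ, pow_succ]
      calc ‖(-R)^k * (-R)‖ ≤ ‖(-R)^k‖ * ‖-R‖ := norm_mul_le _ _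
        _ ≤ ‖R‖^k * ‖R‖ := by
            rw [norm_neg]
            exact mul_le_mul_of_nonneg_right ih (norm_nonneg R)
  have hsumm_norm : Summable (fun n : ℕ => ‖binomHalf n • (-R)^n‖) := by
    refine Summable.of_nonneg_of_le (fun n => norm_nonneg _) (fun n => ?_)
      (summable_geometric_of_lt_one (norm_nonneg R) hRnorm)
    calc ‖binomHalf n • (-R)^n‖ = |binomHalf n| * ‖(-R)^n‖ := by
          rw [norm_smul, Real.norm_eq_abs]
      _ ≤ 1 * ‖R‖^n :=
          mul_le_mul (abs_binomHalf_le n) (hpowle n) (norm_nonneg _) zero_le_one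
      _ = ‖R‖^n := one_mul _
  have hsumm : Summable (fun n : ℕ => binomHalf n • (-R)^n) := hsumm_norm.of_norm
  -- isr commutes with anything commuting with R
  have hcomm : ∀ T : H →L[ℂ] H, R * T = T * R → isr * T = T * isr := by
    intro T hT
    have hT' : Commute R T := hT
    have hpow : ∀ n : ℕ, (-R)^n * T = T * (-R)^n := fun n =>
      ((hT'.neg_left).pow_left n).eq
    have h1 : ∀ n : ℕ, (binomHalf n • (-R)^n) * T = T * (binomHalf n • (-R)^n) := by
      intro n
      rw [smul_mul_assoc, mul_smul_comm, hpow n]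
    rw [hisr, ← hsumm.tsum_mul_right T, ← hsumm.tsum_mul_left T]
    exact tsum_congr h1
  -- selfadjointness of isr
  have hRsa : IsSelfAdjoint R := hR ▸ ((hSsa.sub hQsa).pow 2)
  have hisrsa : IsSelfAdjoint isr := by
    rw [IsSelfAdjoint, hisr, tsum_star]
    refine tsum_congr fun n => ?_
    rw [star_smul, star_pow, star_neg, hRsa.star_eq, star_trivial]
  -- isr * isr = geometric series
  have hsq : isr * isr = ∑' n : ℕ, R^n := by
    rw [hisr, tsum_mul_tsum_eq_tsum_sum_antidiagonal_of_summable_norm hsumm_norm hsumm_norm]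
    refine tsum_congr fun n => ?_
    have e1 : ∀ kl ∈ Finset.HasAntidiagonal.antidiagonal n,
        (binomHalf kl.1 • (-R)^kl.1) * (binomHalf kl.2 • (-R)^kl.2)
        = (binomHalf kl.1 * binomHalf kl.2) • (-R)^n := by
      intro kl hkl
      have h : kl.1 + kl.2 = n := Finset.HasAntidiagonal.mem_antidiagonal.mp hkl
      rw [smul_mul_assoc, mul_smul_comm, ← pow_add, h, smul_smul]
    rw [Finset.sum_congr rfl e1, ← Finset.sum_smul,
      Finset.Nat.sum_antidiagonal_eq_sum_range_succ_mk]
    have e2 : (∑ i ∈ Finset.range (n+1), binomHalf i * binomHalf (n - i)) = (-1:ℝ)^n := by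
      simpa [Fc] using Fc_eq n
    rw [e2]
    have e4 : ∀ m : ℕ, ((-1:ℝ)^m) • (-R)^m = R^m := by
      intro m
      induction m with
      | zero => simp
      | succ k ih =>
        rw [pow_succ, pow_succ, pow_succ, ← smul_mul_smul_comm, ih, neg_smul, one_smul, neg_neg]
    exact e4 n
  have hgeo : isr * isr * (1 - R) = 1 := by
    rw [hsq]; exact geomCLM R hRnorm
  -- algebraic identities
  set A := Q * S + (1 - Q) * (1 - S) with hA
  set B := S * Q + (1 - S) * (1 - Q) with hB
  have hBA : B * A = 1 - R := by rw [hR]; exact ringBA hS2 hQ2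
  have hAB : A * B = 1 - R := by
    rw [hR]
    have := ringBA hQ2 hS2
    rw [show (Q - S)^2 = (S - Q)^2 by rw [← neg_sub S Q, neg_sq]] at this
    exact this
  have hRA : R * A = A * R := by
    have h1 : A * (B * A) = (A * B) * A := (mul_assoc _ _ _).symm
    rw [hBA, hAB, mul_sub, sub_mul, mul_one, one_mul] at h1
    exact (sub_right_inj.mp h1).symm
  have hRB : R * B = B * R := by
    have h1 : B * (A * B) = (B * A) * B := (mul_assoc _ _ _).symm
    rw [hBA, hAB, mul_sub, sub_mul, mul_one, one_mul] at h1
    exact (sub_right_inj.mp h1).symm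
  have hRQ : R * Q = Q * R := by rw [hR]; exact ringRQ hS2 hQ2
  have hR1R : R * (1 - R) = (1 - R) * R := by noncomm_ring
  have hisrA : isr * A = A * isr := hcomm A hRA
  have hisrB : isr * B = B * isr := hcomm B hRB
  have hisrQ : isr * Q = Q * isr := hcomm Q hRQ
  have hc1 : isr * (1 - R) = (1 - R) * isr := hcomm (1 - R) hR1R
  have hgeo' : (1 - R) * (isr * isr) = 1 := by
    rw [← mul_assoc, ← hc1, mul_assoc, ← hc1, ← mul_assoc, hgeo]
  -- J * Ji = 1
  have h1 : J * Ji = 1 := by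
    rw [hJ, hJi, mul_assoc, ← mul_assoc A B isr, hAB, ← hc1, ← mul_assoc, hgeo]
  -- Ji * J = 1
  have hiiA : (isr * isr) * A = A * (isr * isr) := by
    rw [mul_assoc, hisrA, ← mul_assoc, hisrA, mul_assoc]
  have h2 : Ji * J = 1 := by
    rw [hJi, hJ, mul_assoc B isr (isr * A), ← mul_assoc isr isr A, hiiA, ← mul_assoc, hBA]
    exact hgeo'
  -- adjoint
  have hstarA : star A = B := by
    rw [hA, hB]
    simp only [star_add, star_mul, star_sub, star_one, hSsa.star_eq, hQsa.star_eq]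
  have h3 : Ji = ContinuousLinearMap.adjoint J := by
    rw [← ContinuousLinearMap.star_eq_adjoint, hJ, star_mul, hstarA, hisrsa.star_eq, hJi]
  -- norm preservation
  have hstarJ : star J = Ji := by rw [ContinuousLinearMap.star_eq_adjoint, ← h3]
  have hmem : J ∈ unitary (H →L[ℂ] H) := ⟨by rw [hstarJ]; exact h2, by rw [hstarJ]; exact h1⟩
  have h4 : ∀ x : H, ‖J x‖ = ‖x‖ := fun x => J.norm_map_of_mem_unitary hmem x
  -- image
  have hJS : J * S = Q * J := by
    rw [hJ, mul_assoc, ringAS hS2, ← mul_assoc Q isr A, ← hisrQ, mul_assoc isr Q A, ringQA hQ2]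
  refine ⟨h1, h2, h3, h4, ?_⟩
  ext y
  simp only [Set.mem_image, SetLike.mem_coe, LinearMap.mem_range]
  constructor
  · rintro ⟨x, ⟨w, rfl⟩, rfl⟩
    refine ⟨J w, ?_⟩
    have := congrArg (fun T : H →L[ℂ] H => T w) hJS
    simpa using this.symm
  · rintro ⟨z, rfl⟩
    refine ⟨S (Ji z), ⟨Ji z, rfl⟩, ?_⟩
    have e1 : J (S (Ji z)) = Q (J (Ji z)) := by
      have := congrArg (fun T : H →L[ℂ] H => T (Ji z)) hJS
      simpa using this
    have e2 : J (Ji z) = z := by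
      have := congrArg (fun T : H →L[ℂ] H => T z) h1
      simpa using this
    rw [e1, e2]
    rfl
end
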